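/- Let K be a commutative ring of characteristic 0 (or more generally in which no positive integer multiple of 1 is zero). If a word w ∈ A* of length ≥ 2 is primitive for the unshuffle coproduct (c(w) = w⊗1 + 1⊗w), then a contradiction follows; i.e., the only primitive words are the single letters. -/

import Mathlib

open TensorProduct

/-- The unshuffle coproduct on the monoid algebra of the free monoid (= `K⟨A⟩`):
the unique algebra morphism (for the concatenation product) sending each letter `a`
to `a ⊗ 1 + 1 ⊗ a`. -/
noncomputable def unshuffle (K A : Type*) [CommSemiring K] :
    MonoidAlgebra K (FreeMonoid A) →ₐ[K]
      MonoidAlgebra K (FreeMonoid A) ⊗[K] MonoidAlgebra K (FreeMonoid A) :=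
  MonoidAlgebra.lift K _ (FreeMonoid A)
    (FreeMonoid.lift fun a =>
      (MonoidAlgebra.of K (FreeMonoid A) (FreeMonoid.of a)) ⊗ₜ[K] 1
        + 1 ⊗ₜ[K] (MonoidAlgebra.of K (FreeMonoid A) (FreeMonoid.of a)))

/-- The word `l` viewed as an element of `K⟨A⟩`. -/
noncomputable def wd {K : Type*} {A : Type*} [CommSemiring K] (l : List A) :
    MonoidAlgebra K (FreeMonoid A) :=
  MonoidAlgebra.of K (FreeMonoid A) (FreeMonoid.ofList l)

/-- `P` is primitive for the unshuffle coproduct: `c(P) = P ⊗ 1 + 1 ⊗ P`. -/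
def IsPrimitive {K A : Type*} [CommSemiring K] (P : MonoidAlgebra K (FreeMonoid A)) : Prop :=
  unshuffle K A P = P ⊗ₜ[K] 1 + 1 ⊗ₜ[K] P


/-- Auxiliary: the algebra map `K⟨A⟩ → K[X]` sending every letter to `p`. -/
noncomputable def letterTo (K A : Type*) [CommSemiring K] (p : Polynomial K) :
    MonoidAlgebra K (FreeMonoid A) →ₐ[K] Polynomial K :=
  MonoidAlgebra.lift K _ (FreeMonoid A) (FreeMonoid.lift fun _ => p)

lemma wd_cons {K A : Type*} [CommSemiring K] (a : A) (t : List A) :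
    wd (K := K) (a :: t) = MonoidAlgebra.of K (FreeMonoid A) (FreeMonoid.of a) * wd t := by
  rw [wd, wd, ← map_mul]; rfl

lemma letterTo_wd {K A : Type*} [CommSemiring K] (p : Polynomial K) (l : List A) :
    letterTo K A p (wd l) = p ^ l.length := by
  induction l with
  | nil => simp [wd, letterTo]
  | cons a t ih =>
    rw [wd_cons, map_mul, ih]
    simp [letterTo, pow_succ]
    ring

lemma unshuffle_of {K A : Type*} [CommSemiring K] (a : A) :
    unshuffle K A (MonoidAlgebra.of K (FreeMonoid A) (FreeMonoid.of a)) =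
      (MonoidAlgebra.of K (FreeMonoid A) (FreeMonoid.of a)) ⊗ₜ[K] 1
        + 1 ⊗ₜ[K] (MonoidAlgebra.of K (FreeMonoid A) (FreeMonoid.of a)) := by
  simp [unshuffle]

lemma psi_unshuffle_wd {K A : Type*} [CommSemiring K] (l : List A) :
    Algebra.TensorProduct.productMap (letterTo K A 1) (letterTo K A Polynomial.X)
      (unshuffle K A (wd l)) = (1 + Polynomial.X) ^ l.length := by
  induction l with
  | nil =>
    have : wd (K := K) ([] : List A) = 1 := by simp [wd]; rfl
    simp [this]
  | cons a t ih =>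
    rw [wd_cons, map_mul, map_mul, unshuffle_of, List.length_cons, pow_succ]
    rw [map_add, Algebra.TensorProduct.productMap_apply_tmul,
      Algebra.TensorProduct.productMap_apply_tmul, ih]
    simp [letterTo]
    ring

/-- over a ring in which no positive integer multiple of `1` vanishes,
no word of length `≥ 2` is primitive for the unshuffle coproduct. -/
theorem no_primitive_long_words {K A : Type*} [CommRing K]
    (hchar : ∀ n : ℕ, 0 < n → (n : K) ≠ 0)
    (w : List A) (hw : 2 ≤ w.length)
    (hprim : IsPrimitive (wd (K := K) w)) : False := by
  set n := w.length with hn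
  have key := psi_unshuffle_wd (K := K) w
  rw [hprim] at key
  rw [map_add, Algebra.TensorProduct.productMap_apply_tmul,
    Algebra.TensorProduct.productMap_apply_tmul, letterTo_wd, letterTo_wd] at key
  simp only [map_one, one_mul, mul_one, one_pow] at key
  have hcoeff := congrArg (Polynomial.coeff · 1) key
  simp only [Polynomial.coeff_one_add_X_pow, Polynomial.coeff_add, Polynomial.coeff_one,
    Polynomial.coeff_X_pow] at hcoeff
  rw [if_neg (by omega : ¬ (1 : ℕ) = 0), if_neg (by omega : ¬ (1 : ℕ) = w.length),
    Nat.choose_one_right] at hcoeff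
  exact hchar w.length (by omega) (by rw [← hcoeff]; ring)
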